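/- For every v > 0 and every n ∈ ℕ, SAB_{n,v} ⊆ SAB^{⌈2/v⌉}_{n,v,v/2}; that is, every bridge γ of length n with y(γ_n) ≥ vn has at least (v/2)n values of h ∈ ℤ for which 1 ≤ |V_{h,h+1}(γ)| ≤ ⌈2/v⌉. -/

import Mathlib

open scoped BigOperators ENNReal
open Filter MeasureTheory

namespace SAWpaper

/-- Points of `ℤ^d`. -/
abbrev V (d : ℕ) := Fin d → ℤ

/-- The first coordinate `x(u)` (for `d ≥ 1`). -/
def xcoord {d : ℕ} (u : V d) : ℤ := if h : 0 < d then u ⟨0, h⟩ else 0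

/-- The second coordinate `y(u)` (for `d ≥ 2`). -/
def ycoord {d : ℕ} (u : V d) : ℤ := if h : 1 < d then u ⟨1, h⟩ else 0

/-- Euclidean norm of a point of `ℤ^d`. -/
noncomputable def eucNorm {d : ℕ} (u : V d) : ℝ := Real.sqrt (∑ i, ((u i : ℝ)) ^ 2)

/-- Nearest-neighbour adjacency in `ℤ^d`. -/
def adj {d : ℕ} (u v : V d) : Prop := (∑ i, (u i - v i).natAbs) = 1

/-- `γ`, viewed as a function `ℕ → ℤ^d` frozen after time `n`, is a walk of length `n`. -/
def IsWalk {d : ℕ} (n : ℕ) (γ : ℕ → V d) : Prop :=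
  (∀ i, i < n → adj (γ i) (γ (i + 1))) ∧ ∀ i, n ≤ i → γ i = γ n

/-- A self-avoiding walk of length `n` (injective on `{0,…,n}`). -/
def IsSAW {d : ℕ} (n : ℕ) (γ : ℕ → V d) : Prop :=
  IsWalk n γ ∧ ∀ i, i ≤ n → ∀ j, j ≤ n → γ i = γ j → i = j

/-- `SAW_n`: self-avoiding walks of length `n` started at `0`. -/
def SAWset (d n : ℕ) : Set (ℕ → V d) := {γ | γ 0 = 0 ∧ IsSAW n γ}

/-- A bridge: a self-avoiding walk whose first point uniquely minimizes the `y`-coordinate and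
whose final point maximizes it. -/
def IsBridge {d : ℕ} (n : ℕ) (γ : ℕ → V d) : Prop :=
  IsSAW n γ ∧ (∀ i, 0 < i → i ≤ n → ycoord (γ 0) < ycoord (γ i)) ∧
    ∀ i, i ≤ n → ycoord (γ i) ≤ ycoord (γ n)

/-- `SAB_n`: bridges of length `n` started at `0`. -/
def SABset (d n : ℕ) : Set (ℕ → V d) := {γ | γ 0 = 0 ∧ IsBridge n γ}

/-- The uniform probability of an event `A` under `P_SAW_n`. -/
noncomputable def PSAW (d n : ℕ) (A : Set (ℕ → V d)) : ℝ :=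
  (Set.ncard (SAWset d n ∩ A) : ℝ) / (Set.ncard (SAWset d n) : ℝ)

/-- The uniform probability of an event `A` under `P_SAB_n`. -/
noncomputable def PSAB (d n : ℕ) (A : Set (ℕ → V d)) : ℝ :=
  (Set.ncard (SABset d n ∩ A) : ℝ) / (Set.ncard (SABset d n) : ℝ)

/-- `i` is a renewal index of the bridge `γ` of length `n`:
both `γ_{[0,i]}` and `γ_{[i,n]}` are bridges. -/
def IsRenewalIdx {d : ℕ} (n : ℕ) (γ : ℕ → V d) (i : ℕ) : Prop :=
  i ≤ n ∧ (∀ j, 0 < j → j ≤ i → ycoord (γ 0) < ycoord (γ j)) ∧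
    (∀ j, j ≤ i → ycoord (γ j) ≤ ycoord (γ i)) ∧
    (∀ j, i < j → j ≤ n → ycoord (γ i) < ycoord (γ j)) ∧
    ∀ j, i ≤ j → j ≤ n → ycoord (γ j) ≤ ycoord (γ n)

/-- `R_γ`: the set of renewal points of a bridge of length `n`. -/
def renewalPts (d n : ℕ) (γ : ℕ → V d) : Set (V d) :=
  {p | ∃ i, IsRenewalIdx n γ i ∧ γ i = p}

/-- Length of a frozen walk: the first time after which the walk is constant. -/
noncomputable def len {d : ℕ} (γ : ℕ → V d) : ℕ := sInf {N | ∀ i, N ≤ i → γ i = γ N}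

/-- An irreducible bridge of length `n ≥ 1`: no interior renewal index. -/
def IsIrreducible {d : ℕ} (n : ℕ) (γ : ℕ → V d) : Prop :=
  1 ≤ n ∧ IsBridge n γ ∧ ∀ k, 0 < k → k < n → ¬IsRenewalIdx n γ k

/-- `iSAB`: irreducible bridges of arbitrary (positive) length started at `0`. -/
def iSAB (d : ℕ) : Set (ℕ → V d) := {γ | γ 0 = 0 ∧ IsIrreducible (len γ) γ}

/-- `μc` is the connective constant: `|SAW_n|^{1/n} → μc`. -/
def ConnectiveConst (d : ℕ) (μc : ℝ) : Prop :=
  Tendsto (fun n : ℕ => (Set.ncard (SAWset d n) : ℝ) ^ ((n : ℝ)⁻¹)) atTop (nhds μc)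

/-- The ballistic assumption: for some `v > 0`,
`limsup n⁻¹ log P_SAB_n(y(γ_n) ≥ v n) = 0`, i.e. since the quantity is `≤ 0`, for every
`ε > 0` the probability is frequently at least `exp(-ε n)`. -/
def BallisticAssumption (d : ℕ) : Prop :=
  ∃ v : ℝ, 0 < v ∧ ∀ ε : ℝ, 0 < ε →
    ∃ᶠ n : ℕ in atTop, Real.exp (-ε * n) ≤ PSAB d n {γ | v * n ≤ (ycoord (γ n) : ℝ)}

/-- `SAB_{n,v}`: bridges of length `n` with `y(γ_n) ≥ v n`. -/
def SABv (d n : ℕ) (v : ℝ) : Set (ℕ → V d) :=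
  {γ | γ ∈ SABset d n ∧ v * n ≤ (ycoord (γ n) : ℝ)}

/-- The uniform probability of an event `A` under `P_SAB_{n,v}`. -/
noncomputable def PSABv (d n : ℕ) (v : ℝ) (A : Set (ℕ → V d)) : ℝ :=
  (Set.ncard (SABv d n v ∩ A) : ℝ) / (Set.ncard (SABv d n v) : ℝ)

/-- The `h`-visiting edge-set `V_{h,h+1}(γ)` of a walk of length `n`. -/
def visitEdges (d n : ℕ) (γ : ℕ → V d) (h : ℤ) : Set (V d × V d) :=
  {e | (∃ i, i < n ∧ e = (γ i, γ (i + 1))) ∧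
    ((ycoord e.1 = h ∧ ycoord e.2 = h + 1) ∨ (ycoord e.1 = h + 1 ∧ ycoord e.2 = h))}

/-- `SAB^m_{n,v,δ}`: members of `SAB_{n,v}` for which at least `δ n` levels `h` satisfy
`1 ≤ |V_{h,h+1}(γ)| ≤ m`. -/
def SABvk (d n : ℕ) (v δ : ℝ) (m : ℕ) : Set (ℕ → V d) :=
  {γ | γ ∈ SABv d n v ∧
    δ * n ≤ (Set.ncard {h : ℤ |
      1 ≤ Set.ncard (visitEdges d n γ h) ∧ Set.ncard (visitEdges d n γ h) ≤ m} : ℝ)}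

/-- `(i,j)` is a zigzag of the bridge `γ` of length `n`: `i` is the largest index attaining
the maximum of `y(γ_k)` over `1 ≤ k ≤ j`, and `j` is the largest index attaining the minimum
of `y(γ_k)` over `i ≤ k ≤ n`. -/
def IsZigZag {d : ℕ} (n : ℕ) (γ : ℕ → V d) (i j : ℕ) : Prop :=
  1 ≤ i ∧ i ≤ j ∧ j ≤ n ∧
  (∀ k, 1 ≤ k → k ≤ j → ycoord (γ k) ≤ ycoord (γ i)) ∧
  (∀ k, 1 ≤ k → k ≤ j → ycoord (γ k) = ycoord (γ i) → k ≤ i) ∧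
  (∀ k, i ≤ k → k ≤ n → ycoord (γ j) ≤ ycoord (γ k)) ∧
  ∀ k, i ≤ k → k ≤ n → ycoord (γ k) = ycoord (γ j) → k ≤ j

/-- Concatenation of two (frozen) walks, the first having length `m`. -/
def concatW {d : ℕ} (m : ℕ) (γ γ' : ℕ → V d) : ℕ → V d :=
  fun k => if k ≤ m then γ k else γ m + (γ' (k - m) - γ' 0)

/-- Concatenation of a finite list of (frozen) walks. -/
noncomputable def concatList {d : ℕ} : List (ℕ → V d) → ℕ → V d
  | [] => fun _ => 0
  | g :: l => concatW (len g) g (concatList l)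

/-- Orthogonal reflection in the hyperplane `{u : y(u) = c}`. -/
def reflY {d : ℕ} (c : ℤ) (u : V d) : V d :=
  fun m => if (m : ℕ) = 1 then 2 * c - u m else u m

/-- The unfolding `Unf_{(i,j)}(γ) = γ_{[0,i]} ∘ R_{γ_i}(γ_{[i,j]}) ∘ γ_{[j,n]}`,
written pointwise. -/
def unf {d : ℕ} (γ : ℕ → V d) (i j : ℕ) : ℕ → V d :=
  fun k => if k ≤ i then γ k
    else if k ≤ j then reflY (ycoord (γ i)) (γ k)
    else fun m => if (m : ℕ) = 1 then γ k m + 2 * (ycoord (γ i) - ycoord (γ j)) else γ k m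

/-- The first standard basis vector `e₁`. -/
def e1vec (d : ℕ) : V d := fun m => if (m : ℕ) = 0 then 1 else 0

/-- Clockwise rotation by `π/2` about the point `(x(c), y(c))` in the first two coordinates,
identity in the remaining coordinates. -/
def rotCW {d : ℕ} (c u : V d) : V d :=
  fun m => if (m : ℕ) = 0 then xcoord c + (ycoord u - ycoord c)
    else if (m : ℕ) = 1 then ycoord c - (xcoord u - xcoord c)
    else u m

/-- `γ_i` is a diamond point of the walk `γ` of length `n`. -/
def IsDiamond {d : ℕ} (n : ℕ) (γ : ℕ → V d) (i : ℕ) : Prop :=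
  i ≤ n ∧
  (∀ j, i ≤ j → j ≤ n →
    xcoord (γ i) + ycoord (γ i) ≤ xcoord (γ j) + ycoord (γ j) ∧
    ycoord (γ i) - xcoord (γ i) ≤ ycoord (γ j) - xcoord (γ j)) ∧
  ∀ j, j ≤ i →
    xcoord (γ j) + ycoord (γ j) ≤ xcoord (γ i) + ycoord (γ i) ∧
    ycoord (γ j) - xcoord (γ j) ≤ ycoord (γ i) - xcoord (γ i)

/-- The stickbreak operation `γ_{[0,a]} ∘ τ^{e₁} ∘ ρ(γ_{[a,b]}) ∘ τ^{e₁} ∘ γ_{[b,n]}`,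
written pointwise (a walk of length `n + 2`). -/
def stickbreak {d : ℕ} (γ : ℕ → V d) (a b : ℕ) : ℕ → V d :=
  fun k => if k ≤ a then γ k
    else if k ≤ b + 1 then rotCW (γ a) (γ (k - 1)) + e1vec d
    else γ (k - 2) + (rotCW (γ a) (γ b) + e1vec d + e1vec d - γ b)

/-- For every `v > 0` and every `n`, `SAB_{n,v} ⊆ SAB^{⌈2/v⌉}_{n,v,v/2}`. -/
theorem sabv_subset_sabvk (d : ℕ) (hd : 2 ≤ d) (v : ℝ) (hv : 0 < v) (n : ℕ) :
    SABv d n v ⊆ SABvk d n v (v / 2) ⌈2 / v⌉₊ := by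
  intro γ hγ
  refine ⟨hγ, ?_⟩
  obtain ⟨⟨h0, hbr⟩, hyn⟩ := hγ
  have hwalk : ∀ i, i < n → adj (γ i) (γ (i + 1)) := hbr.1.1.1
  have h1d : (1 : ℕ) < d := by omega
  -- y changes by at most 1 at each step
  have hstep : ∀ i, i < n → (ycoord (γ (i + 1)) - ycoord (γ i)).natAbs ≤ 1 := by
    intro i hi
    have hadj := hwalk i hi
    unfold adj at hadj
    have hle : ((γ i) ⟨1, h1d⟩ - (γ (i + 1)) ⟨1, h1d⟩).natAbs ≤ 1 := by
      calc ((γ i) ⟨1, h1d⟩ - (γ (i + 1)) ⟨1, h1d⟩).natAbs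
          ≤ ∑ j, ((γ i) j - (γ (i + 1)) j).natAbs :=
            Finset.single_le_sum (f := fun j => ((γ i) j - (γ (i + 1)) j).natAbs)
              (fun j _ => Nat.zero_le _) (Finset.mem_univ (⟨1, h1d⟩ : Fin d))
        _ = 1 := hadj
    simp only [ycoord, dif_pos h1d]
    omega
  set m : ℕ := ⌈2 / v⌉₊ with hm
  -- the finset of crossing steps at level h
  set F : ℤ → Finset ℕ := fun h => (Finset.range n).filter
    (fun i => (ycoord (γ i) = h ∧ ycoord (γ (i + 1)) = h + 1) ∨
      (ycoord (γ i) = h + 1 ∧ ycoord (γ (i + 1)) = h)) with hF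
  have hVF : ∀ h : ℤ, visitEdges d n γ h = (fun i => (γ i, γ (i + 1))) '' ↑(F h) := by
    intro h
    ext e
    simp only [visitEdges, Set.mem_setOf_eq, Set.mem_image, Finset.coe_filter,
      Finset.mem_range, hF, Set.mem_setOf_eq]
    constructor
    · rintro ⟨⟨i, hi, rfl⟩, hc⟩
      exact ⟨i, ⟨hi, hc⟩, rfl⟩
    · rintro ⟨i, ⟨hi, hc⟩, rfl⟩
      exact ⟨⟨i, hi, rfl⟩, hc⟩
  have hVfin : ∀ h : ℤ, (visitEdges d n γ h).Finite := by
    intro h; rw [hVF h]; exact (F h).finite_toSet.image _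
  have hVle : ∀ h : ℤ, (visitEdges d n γ h).ncard ≤ (F h).card := by
    intro h
    rw [hVF h]
    calc ((fun i => (γ i, γ (i + 1))) '' ↑(F h)).ncard
        ≤ (↑(F h) : Set ℕ).ncard := Set.ncard_image_le (F h).finite_toSet
      _ = (F h).card := Set.ncard_coe_finset _
  -- crossing lemma
  have hy0 : ycoord (γ 0) = 0 := by rw [h0]; simp [ycoord]
  have hcross : ∀ h : ℤ, 0 ≤ h → h < ycoord (γ n) →
      ∃ i, i < n ∧ ycoord (γ i) = h ∧ ycoord (γ (i + 1)) = h + 1 := by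
    intro h hh0 hhn
    by_contra hcon
    push_neg at hcon
    have key : ∀ i, i ≤ n → ycoord (γ i) ≤ h := by
      intro i
      induction i with
      | zero => intro _; omega
      | succ k ih =>
        intro hk
        have hk' : k < n := by omega
        have hkle : ycoord (γ k) ≤ h := ih (by omega)
        have hs := hstep k hk'
        by_contra hgt
        push_neg at hgt
        have h1 : ycoord (γ k) = h := by omega
        have h2 : ycoord (γ (k + 1)) = h + 1 := by omega
        exact (hcon k hk' h1) h2
    have := key n le_rfl
    omega
  -- relevant levels
  set B : Finset ℤ := Finset.Ico (0 : ℤ) (ycoord (γ n)) with hB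
  have hV1 : ∀ h ∈ B, 1 ≤ (visitEdges d n γ h).ncard := by
    intro h hh
    rw [Finset.mem_Ico] at hh
    obtain ⟨i, hi, h1, h2⟩ := hcross h hh.1 hh.2
    have hne : (visitEdges d n γ h).Nonempty :=
      ⟨(γ i, γ (i + 1)), ⟨⟨i, hi, rfl⟩, Or.inl ⟨h1, h2⟩⟩⟩
    exact (Set.ncard_pos (hVfin h)).mpr hne
  -- the bad levels
  set C : Finset ℤ := B.filter (fun h => m + 1 ≤ (F h).card) with hC
  have hFdisj : ∀ h h' : ℤ, h ≠ h' → Disjoint (F h) (F h') := by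
    intro h h' hne
    rw [Finset.disjoint_left]
    intro i hi hi'
    simp only [hF, Finset.mem_filter, Finset.mem_range] at hi hi'
    rcases hi.2 with ⟨a1, a2⟩ | ⟨a1, a2⟩ <;> rcases hi'.2 with ⟨b1, b2⟩ | ⟨b1, b2⟩ <;> omega
  have hsumC : (m + 1) * C.card ≤ n := by
    calc (m + 1) * C.card = ∑ _h ∈ C, (m + 1) := by
          rw [Finset.sum_const, smul_eq_mul, mul_comm]
      _ ≤ ∑ h ∈ C, (F h).card := by
          refine Finset.sum_le_sum ?_
          intro h hh
          exact (Finset.mem_filter.mp hh).2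
      _ = (C.biUnion F).card := by
          rw [Finset.card_biUnion]
          intro h _ h' _ hne
          exact hFdisj h h' hne
      _ ≤ (Finset.range n).card := by
          apply Finset.card_le_card
          intro i hi
          obtain ⟨h, _, hih⟩ := Finset.mem_biUnion.mp hi
          exact (Finset.mem_filter.mp hih).1
      _ = n := Finset.card_range n
  -- the good set
  set A : Set ℤ := {h : ℤ | 1 ≤ (visitEdges d n γ h).ncard ∧
    (visitEdges d n γ h).ncard ≤ m} with hA
  have hBCsub : (↑(B \ C) : Set ℤ) ⊆ A := by
    intro h hh
    rw [Finset.coe_sdiff, Set.mem_diff] at hh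
    obtain ⟨hhB, hhC⟩ := hh
    have hhB' : h ∈ B := hhB
    refine ⟨hV1 h hhB', ?_⟩
    have : ¬(m + 1 ≤ (F h).card) := by
      intro hcard
      exact hhC (Finset.mem_coe.mpr (Finset.mem_filter.mpr ⟨hhB', hcard⟩))
    have := hVle h
    omega
  have hAfin : A.Finite := by
    apply Set.Finite.subset ((Finset.range (n + 1)).image (fun i => ycoord (γ i))).finite_toSet
    intro h hh
    obtain ⟨h1, _⟩ := hh
    have hne : (visitEdges d n γ h).Nonempty := by
      rw [Set.nonempty_iff_ne_empty]
      intro hemp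
      rw [hemp, Set.ncard_empty] at h1
      omega
    obtain ⟨e, ⟨i, hi, rfl⟩, hc⟩ := hne
    simp only [Finset.coe_image, Set.mem_image, Finset.mem_coe, Finset.mem_range]
    rcases hc with ⟨c1, _⟩ | ⟨_, c2⟩
    · exact ⟨i, by omega, c1⟩
    · exact ⟨i + 1, by omega, c2⟩
  have hcard1 : (B \ C).card ≤ A.ncard := by
    calc (B \ C).card = (↑(B \ C) : Set ℤ).ncard := (Set.ncard_coe_finset _).symm
      _ ≤ A.ncard := Set.ncard_le_ncard hBCsub hAfin
  have hCB : C ⊆ B := Finset.filter_subset _ _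
  have hcard2 : (B \ C).card = B.card - C.card := Finset.card_sdiff_of_subset hCB
  have hcardB : B.card = (ycoord (γ n)).toNat := by
    rw [hB, Int.card_Ico]; simp
  -- numerics
  have hCBcard : C.card ≤ B.card := Finset.card_le_card hCB
  have hBreal : v * n ≤ (B.card : ℝ) := by
    have h1 : (ycoord (γ n) : ℝ) ≤ ((ycoord (γ n)).toNat : ℝ) := by
      exact_mod_cast Int.self_le_toNat _
    rw [hcardB]
    linarith
  have hmge : 2 / v ≤ (m : ℝ) := Nat.le_ceil _
  have hsumCreal : ((m : ℝ) + 1) * (C.card : ℝ) ≤ (n : ℝ) := by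
    exact_mod_cast hsumC
  have hCreal : (C.card : ℝ) ≤ v / 2 * n := by
    have hcn : (2 / v) * (C.card : ℝ) ≤ (n : ℝ) := by
      have : (2 / v) * (C.card : ℝ) ≤ ((m : ℝ) + 1) * (C.card : ℝ) := by
        apply mul_le_mul_of_nonneg_right (by linarith) (by positivity)
      linarith
    have h2 : (2 / v) * (C.card : ℝ) * (v / 2) ≤ (n : ℝ) * (v / 2) := by
      apply mul_le_mul_of_nonneg_right hcn (by positivity)
    have h3 : (2 / v) * (C.card : ℝ) * (v / 2) = (C.card : ℝ) := by
      field_simp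
    linarith [h3 ▸ h2]
  have hAreal : (B.card : ℝ) - (C.card : ℝ) ≤ (A.ncard : ℝ) := by
    have : ((B.card - C.card : ℕ) : ℝ) = (B.card : ℝ) - (C.card : ℝ) :=
      Nat.cast_sub hCBcard
    rw [← this]
    exact_mod_cast hcard2 ▸ hcard1
  show v / 2 * n ≤ (A.ncard : ℝ)
  linarith

end SAWpaper
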